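/- Let d, m ≥ 1. Let N : Fin m → Matrix (Fin d) (Fin d) ℂ satisfy Σ_i N_iᴴ N_i ⊑ I in the Loewner order, and let M₀, M₁ be d×d complex matrices with M₀ᴴM₀ + M₁ᴴM₁ = I. Define Φ(ρ) = Σ_i N_i ρ N_iᴴ and ℰ₁(ρ) = M₁ ρ M₁ᴴ. Suppose ρ is a positive semidefinite d×d complex matrix such that Σ_{k=0}^∞ tr(M₀ (Φ ∘ ℰ₁)^k(ρ) M₀ᴴ) = tr(ρ). Then: (1) tr((Φ ∘ ℰ₁)^k(ρ)) → 0 as k → ∞; and (2) for every k ∈ ℕ, tr(Φ(σ_k)) = tr(σ_k), where σ_k = M₁ (Φ ∘ ℰ₁)^k(ρ) M₁ᴴ. -/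

import Mathlib

open Matrix Filter
open scoped ComplexOrder

/-- The Loewner order: `A ⊑ B` iff `B - A` is positive semidefinite. -/
def loewner {d : ℕ} (A B : Matrix (Fin d) (Fin d) ℂ) : Prop := (B - A).PosSemidef

/-- The body super-operator `Φ(σ) = Σ_i N_i σ N_iᴴ`. -/
noncomputable def bodyMap {d m : ℕ} (N : Fin m → Matrix (Fin d) (Fin d) ℂ)
    (σ : Matrix (Fin d) (Fin d) ℂ) : Matrix (Fin d) (Fin d) ℂ :=
  ∑ i, N i * σ * (N i)ᴴ

/-- One loop iteration `ρ ↦ Φ(M₁ ρ M₁ᴴ)`. -/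
noncomputable def loopStep {d m : ℕ} (N : Fin m → Matrix (Fin d) (Fin d) ℂ)
    (M₁ : Matrix (Fin d) (Fin d) ℂ) (ρ : Matrix (Fin d) (Fin d) ℂ) :
    Matrix (Fin d) (Fin d) ℂ :=
  bodyMap N (M₁ * ρ * M₁ᴴ)

lemma psd_trace_nonneg {d : ℕ} {A : Matrix (Fin d) (Fin d) ℂ} (hA : A.PosSemidef) :
    0 ≤ A.trace := by
  rw [Matrix.trace]
  apply Finset.sum_nonneg
  intro i _
  have := hA.dotProduct_mulVec_nonneg (Pi.single i 1)
  simpa [dotProduct, Matrix.mulVec, Pi.single_apply] using this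

lemma psd_trace_eq_re {d : ℕ} {A : Matrix (Fin d) (Fin d) ℂ} (hA : A.PosSemidef) :
    A.trace = (A.trace.re : ℂ) := by
  have h := psd_trace_nonneg hA
  rw [Complex.nonneg_iff] at h
  exact Complex.ext rfl (by simpa using h.2.symm)

open scoped MatrixOrder in
lemma psd_trace_mul_nonneg {d : ℕ} {B σ : Matrix (Fin d) (Fin d) ℂ}
    (hB : B.PosSemidef) (hσ : σ.PosSemidef) : 0 ≤ (B * σ).trace := by
  have h1 : B * σ = B * (CFC.sqrt σ * CFC.sqrt σ) := by rw [CFC.sqrt_mul_sqrt_self σ hσ.nonneg]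
  rw [h1, ← mul_assoc, Matrix.trace_mul_cycle]
  have : (CFC.sqrt σ * B * CFC.sqrt σ).PosSemidef := by
    have := hB.mul_mul_conjTranspose_same (CFC.sqrt σ)
    rwa [(CFC.sqrt_nonneg σ).posSemidef.1.eq] at this
  exact psd_trace_nonneg this

lemma psd_add {d : ℕ} {A B : Matrix (Fin d) (Fin d) ℂ}
    (hA : A.PosSemidef) (hB : B.PosSemidef) : (A + B).PosSemidef :=
  hA.add hB

lemma psd_zero {d : ℕ} : (0 : Matrix (Fin d) (Fin d) ℂ).PosSemidef :=
  ⟨Matrix.isHermitian_zero, fun x => by simp⟩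

lemma bodyMap_posSemidef {d m : ℕ} (N : Fin m → Matrix (Fin d) (Fin d) ℂ)
    {σ : Matrix (Fin d) (Fin d) ℂ} (hσ : σ.PosSemidef) : (bodyMap N σ).PosSemidef := by
  unfold bodyMap
  exact Finset.sum_induction _ _ (fun _ _ => psd_add) psd_zero
    (fun i _ => hσ.mul_mul_conjTranspose_same (N i))

lemma bodyMap_trace {d m : ℕ} (N : Fin m → Matrix (Fin d) (Fin d) ℂ)
    (σ : Matrix (Fin d) (Fin d) ℂ) :
    (bodyMap N σ).trace = ((∑ i, (N i)ᴴ * N i) * σ).trace := by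
  unfold bodyMap
  rw [Matrix.trace_sum, Finset.sum_mul, Matrix.trace_sum]
  exact Finset.sum_congr rfl fun i _ => by
    rw [Matrix.trace_mul_cycle, mul_assoc]

/-- If a quantum while-loop with trace-nonincreasing body terminates almost surely on
input `ρ`, then the probability of surviving `k` iterations tends to `0`, and the body
acts trace-preservingly on every intermediate state `σ_k = M₁ (Φ ∘ ℰ₁)^k(ρ) M₁ᴴ`. -/
theorem ast_implies_survival_tendsto_zero
    (d m : ℕ) (hd : 1 ≤ d) (hm : 1 ≤ m)
    (N : Fin m → Matrix (Fin d) (Fin d) ℂ)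
    (hN : loewner (∑ i, (N i)ᴴ * N i) 1)
    (M₀ M₁ : Matrix (Fin d) (Fin d) ℂ)
    (hM : M₀ᴴ * M₀ + M₁ᴴ * M₁ = 1)
    (ρ : Matrix (Fin d) (Fin d) ℂ) (hρ : ρ.PosSemidef)
    (hterm : ∑' k : ℕ, ((M₀ * ((loopStep N M₁)^[k] ρ) * M₀ᴴ).trace).re = ρ.trace.re) :
    Tendsto (fun k : ℕ => ((loopStep N M₁)^[k] ρ).trace) atTop (nhds 0) ∧
      ∀ k : ℕ, (bodyMap N (M₁ * ((loopStep N M₁)^[k] ρ) * M₁ᴴ)).trace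
        = (M₁ * ((loopStep N M₁)^[k] ρ) * M₁ᴴ).trace := by
  set ρk : ℕ → Matrix (Fin d) (Fin d) ℂ := fun k => (loopStep N M₁)^[k] ρ with hρk
  have hPSD : ∀ k, (ρk k).PosSemidef := by
    intro k
    induction k with
    | zero => exact hρ
    | succ n ih =>
      have : ρk (n + 1) = loopStep N M₁ (ρk n) := Function.iterate_succ_apply' _ _ _
      rw [this]
      exact bodyMap_posSemidef N (ih.mul_mul_conjTranspose_same M₁)
  set σk : ℕ → Matrix (Fin d) (Fin d) ℂ := fun k => M₁ * ρk k * M₁ᴴ with hσk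
  have hσPSD : ∀ k, (σk k).PosSemidef := fun k => (hPSD k).mul_mul_conjTranspose_same M₁
  set t : ℕ → ℝ := fun k => ((ρk k).trace).re with ht
  set p : ℕ → ℝ := fun k => ((M₀ * ρk k * M₀ᴴ).trace).re with hp
  set s : ℕ → ℝ := fun k => ((σk k).trace).re with hs
  -- split of trace
  have hsplit : ∀ k, p k + s k = t k := by
    intro k
    have : (M₀ * ρk k * M₀ᴴ).trace + (σk k).trace = (ρk k).trace := by
      rw [Matrix.trace_mul_cycle M₀ (ρk k) M₀ᴴ, Matrix.trace_mul_cycle M₁ (ρk k) M₁ᴴ,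
        ← Matrix.trace_add, ← Matrix.add_mul, hM, Matrix.one_mul]
    have := congrArg Complex.re this
    simpa using this
  -- trace loss in body map is nonneg
  have hδ_nonneg : ∀ k, 0 ≤ s k - t (k + 1) := by
    intro k
    have hstep : ρk (k + 1) = bodyMap N (σk k) := Function.iterate_succ_apply' _ _ _
    have hle : 0 ≤ ((1 - ∑ i, (N i)ᴴ * N i) * σk k).trace := psd_trace_mul_nonneg hN (hσPSD k)
    have : ((1 - ∑ i, (N i)ᴴ * N i) * σk k).trace = (σk k).trace - (ρk (k + 1)).trace := by
      rw [hstep, bodyMap_trace, Matrix.sub_mul, Matrix.trace_sub, Matrix.one_mul]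
    rw [this, Complex.nonneg_iff] at hle
    simpa using hle.1
  have hp_nonneg : ∀ k, 0 ≤ p k := by
    intro k
    have := psd_trace_nonneg ((hPSD k).mul_mul_conjTranspose_same M₀)
    rw [Complex.nonneg_iff] at this
    exact this.1
  have ht_nonneg : ∀ k, 0 ≤ t k := by
    intro k
    have := psd_trace_nonneg (hPSD k)
    rw [Complex.nonneg_iff] at this
    exact this.1
  -- partial sum identity
  have hpartial : ∀ n, ∑ j ∈ Finset.range n, (p j + (s j - t (j + 1))) + t n = t 0 := by
    intro n
    induction n with
    | zero => simp
    | succ n ih =>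
      rw [Finset.sum_range_succ]
      have := hsplit n
      linarith [ih]
  have hterm_nonneg : ∀ k, 0 ≤ p k + (s k - t (k + 1)) := fun k =>
    add_nonneg (hp_nonneg k) (hδ_nonneg k)
  have hpsum_le : ∀ n, ∑ j ∈ Finset.range n, p j ≤ t 0 := by
    intro n
    have h1 : ∑ j ∈ Finset.range n, p j ≤ ∑ j ∈ Finset.range n, (p j + (s j - t (j + 1))) :=
      Finset.sum_le_sum fun j _ => by linarith [hδ_nonneg j]
    linarith [hpartial n, ht_nonneg n]
  have hsummable : Summable p :=
    summable_of_sum_range_le hp_nonneg hpsum_le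
  have htsum : ∑' k, p k = t 0 := hterm
  have hsum_tendsto : Tendsto (fun n => ∑ j ∈ Finset.range n, p j) atTop (nhds (t 0)) := by
    have := hsummable.hasSum.tendsto_sum_nat
    rwa [htsum] at this
  -- each deficit is zero
  have hδ_zero : ∀ k, s k - t (k + 1) = 0 := by
    intro k
    have hub : ∀ n, k < n → ∑ j ∈ Finset.range n, p j + (s k - t (k + 1)) ≤ t 0 := by
      intro n hkn
      have h1 : s k - t (k + 1) ≤ ∑ j ∈ Finset.range n, (s j - t (j + 1)) :=
        Finset.single_le_sum (fun j _ => hδ_nonneg j) (Finset.mem_range.mpr hkn)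
      have h2 : ∑ j ∈ Finset.range n, (p j + (s j - t (j + 1)))
          = ∑ j ∈ Finset.range n, p j + ∑ j ∈ Finset.range n, (s j - t (j + 1)) :=
        Finset.sum_add_distrib
      linarith [hpartial n, ht_nonneg n]
    have hlim : Tendsto (fun n => ∑ j ∈ Finset.range n, p j + (s k - t (k + 1))) atTop
        (nhds (t 0 + (s k - t (k + 1)))) := hsum_tendsto.add_const _
    have hle : t 0 + (s k - t (k + 1)) ≤ t 0 :=
      le_of_tendsto hlim (eventually_atTop.mpr ⟨k + 1, fun n hn => hub n (by omega)⟩)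
    linarith [hδ_nonneg k]
  constructor
  · -- Tendsto
    have ht_eq : ∀ n, t n = t 0 - ∑ j ∈ Finset.range n, p j := by
      intro n
      have := hpartial n
      have hz : ∑ j ∈ Finset.range n, (p j + (s j - t (j + 1))) = ∑ j ∈ Finset.range n, p j := by
        refine Finset.sum_congr rfl fun j _ => ?_
        rw [hδ_zero j]; ring
      linarith [this, hz.le, hz.ge]
    have ht_tendsto : Tendsto t atTop (nhds 0) := by
      have : Tendsto (fun n => t 0 - ∑ j ∈ Finset.range n, p j) atTop (nhds (t 0 - t 0)) :=
        tendsto_const_nhds.sub hsum_tendsto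
      rw [sub_self] at this
      exact this.congr fun n => (ht_eq n).symm
    have hre : ∀ k, (ρk k).trace = ((t k : ℝ) : ℂ) := fun k => psd_trace_eq_re (hPSD k)
    have : Tendsto (fun k => ((t k : ℝ) : ℂ)) atTop (nhds ((0 : ℝ) : ℂ)) :=
      (Complex.continuous_ofReal.tendsto 0).comp ht_tendsto
    rw [Complex.ofReal_zero] at this
    exact this.congr fun k => (hre k).symm
  · -- trace preservation
    intro k
    have hstep : ρk (k + 1) = bodyMap N (M₁ * ρk k * M₁ᴴ) :=
      Function.iterate_succ_apply' _ _ _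
    have h1 : (ρk (k + 1)).trace = ((t (k + 1) : ℝ) : ℂ) := psd_trace_eq_re (hPSD (k + 1))
    have h2 : (σk k).trace = ((s k : ℝ) : ℂ) := psd_trace_eq_re (hσPSD k)
    have h3 : t (k + 1) = s k := by linarith [hδ_zero k]
    show (bodyMap N (σk k)).trace = (σk k).trace
    rw [← hstep, h1, h2, h3]
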